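/- For all x in (0, π/2), 3·sin(x)/(2 + cos(x)) < x < (2/3)·sin(x) + (1/3)·tan(x). -/

import Mathlib

open Real

private lemma sin_sub_mul_cos_pos {t : ℝ} (h1 : 0 < t) (h2 : t < π/2) :
    0 < sin t - t * cos t := by
  have hc : 0 < cos t := Real.cos_pos_of_mem_Ioo ⟨by linarith [pi_pos], h2⟩
  have ht := lt_tan h1 h2
  rw [Real.tan_eq_sin_div_cos] at ht
  rw [lt_div_iff₀ hc] at ht
  linarith

private lemma aux_g_pos {x : ℝ} (h1 : 0 < x) (h2 : x < π/2) :
    0 < 2 - 2 * cos x - x * sin x := by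
  set g : ℝ → ℝ := fun t => 2 - 2 * cos t - t * sin t with hg
  have hd : ∀ t, HasDerivAt g (sin t - t * cos t) t := by
    intro t
    have h1 : HasDerivAt (fun t : ℝ => 2 - 2 * cos t) (2 * sin t) t := by
      simpa using ((Real.hasDerivAt_cos t).const_mul 2).const_sub 2
    have h2 : HasDerivAt (fun t : ℝ => t * sin t) (1 * sin t + t * cos t) t :=
      (hasDerivAt_id t).mul (Real.hasDerivAt_sin t)
    have := h1.sub h2
    exact this.congr_deriv (by ring)
  have hmono : StrictMonoOn g (Set.Icc 0 (π/2)) := by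
    apply strictMonoOn_of_deriv_pos (convex_Icc _ _)
    · exact fun t _ => (hd t).continuousAt.continuousWithinAt
    · intro t ht
      rw [interior_Icc] at ht
      rw [(hd t).deriv]
      exact sin_sub_mul_cos_pos ht.1 ht.2
  have h0 : g 0 = 0 := by simp [hg]
  have := hmono (Set.left_mem_Icc.2 (by linarith)) ⟨le_of_lt h1, le_of_lt h2⟩ h1
  rw [h0] at this
  simpa [hg] using this

private lemma cusa_left {x : ℝ} (h1 : 0 < x) (h2 : x < π/2) :
    3 * sin x < x * (2 + cos x) := by
  set f : ℝ → ℝ := fun t => t * (2 + cos t) - 3 * sin t with hf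
  have hd : ∀ t, HasDerivAt f (2 - 2 * cos t - t * sin t) t := by
    intro t
    have ha : HasDerivAt (fun t : ℝ => t * (2 + cos t)) (1 * (2 + cos t) + t * (-sin t)) t :=
      (hasDerivAt_id t).mul ((Real.hasDerivAt_cos t).const_add 2)
    have hb : HasDerivAt (fun t : ℝ => 3 * sin t) (3 * cos t) t :=
      (Real.hasDerivAt_sin t).const_mul 3
    have := ha.sub hb
    exact this.congr_deriv (by ring)
  have hmono : StrictMonoOn f (Set.Icc 0 (π/2)) := by
    apply strictMonoOn_of_deriv_pos (convex_Icc _ _)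
    · exact fun t _ => (hd t).continuousAt.continuousWithinAt
    · intro t ht
      rw [interior_Icc] at ht
      rw [(hd t).deriv]
      exact aux_g_pos ht.1 ht.2
  have h0 : f 0 = 0 := by simp [hf]
  have := hmono (Set.left_mem_Icc.2 (by linarith)) ⟨le_of_lt h1, le_of_lt h2⟩ h1
  rw [h0] at this
  simp only [hf] at this
  linarith

private lemma cusa_right {x : ℝ} (h1 : 0 < x) (h2 : x < π/2) :
    3 * x < 2 * sin x + tan x := by
  set f : ℝ → ℝ := fun t => 2 * sin t + tan t - 3 * t with hf
  have hmono : StrictMonoOn f (Set.Ico 0 (π/2)) := by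
    apply strictMonoOn_of_deriv_pos (convex_Ico _ _)
    · intro t ht
      have hc : 0 < cos t := Real.cos_pos_of_mem_Ioo ⟨by linarith [pi_pos, ht.1], ht.2⟩
      have hd : HasDerivAt f (2 * cos t + 1 / cos t ^ 2 - 3 * 1) t :=
        (((Real.hasDerivAt_sin t).const_mul 2).add (Real.hasDerivAt_tan hc.ne')).sub
          ((hasDerivAt_id t).const_mul 3)
      exact hd.continuousAt.continuousWithinAt
    · intro t ht
      rw [interior_Ico] at ht
      have hc : 0 < cos t := Real.cos_pos_of_mem_Ioo ⟨by linarith [pi_pos, ht.1], ht.2⟩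
      have hd : HasDerivAt f (2 * cos t + 1 / cos t ^ 2 - 3 * 1) t :=
        (((Real.hasDerivAt_sin t).const_mul 2).add (Real.hasDerivAt_tan hc.ne')).sub
          ((hasDerivAt_id t).const_mul 3)
      rw [hd.deriv]
      have hs : 0 < sin t := Real.sin_pos_of_pos_of_lt_pi ht.1 (by linarith [pi_pos, ht.2])
      have hc1 : cos t < 1 := by
        nlinarith [Real.sin_sq_add_cos_sq t, Real.cos_le_one t]
      have hcsq : 0 < cos t ^ 2 := pow_pos hc 2
      rw [sub_pos, ← sub_pos]
      have key : 2 * cos t + 1 / cos t ^ 2 - 3 * 1 =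
          ((1 - cos t)^2 * (2 * cos t + 1)) / cos t ^ 2 := by
        field_simp
        ring
      rw [key]
      apply div_pos _ hcsq
      apply mul_pos (pow_pos (by linarith) 2) (by linarith)
  have h0 : f 0 = 0 := by simp [hf]
  have := hmono (Set.left_mem_Ico.2 (by linarith)) ⟨le_of_lt h1, h2⟩ h1
  rw [h0] at this
  simp only [hf] at this
  linarith

theorem cusa_huygens (x : ℝ) (hx : x ∈ Set.Ioo 0 (π / 2)) :
    3 * sin x / (2 + cos x) < x ∧ x < (2 / 3) * sin x + (1 / 3) * tan x := by
  obtain ⟨h1, h2⟩ := hx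
  have hc : 0 < cos x := Real.cos_pos_of_mem_Ioo ⟨by linarith [pi_pos], h2⟩
  constructor
  · rw [div_lt_iff₀ (by linarith)]
    exact cusa_left h1 h2
  · have := cusa_right h1 h2
    linarith
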